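/- For every n ≥ 1 and any two vertices x, y of the n-dimensional hypercube Q_n with opposite parities (i.e., the Hamming distance d(x,y) is odd), there exists a Hamiltonian path in Q_n joining x and y. -/

import Mathlib

open SimpleGraph Finset

/-- The n-dimensional hypercube: vertices are 0/1 vectors, adjacent iff
Hamming distance is 1. -/
def cube (n : ℕ) : SimpleGraph (Fin n → ZMod 2) where
  Adj x y := hammingDist x y = 1
  symm := by constructor; intro x y h; rwa [hammingDist_comm]
  loopless := by constructor; intro x h; simp [hammingDist_self] at h

/-- Parity of a vertex: sum of coordinates mod 2. -/
def parity {n : ℕ} (u : Fin n → ZMod 2) : ZMod 2 := ∑ i, u i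

lemma hd_eq_sum {n : ℕ} (x y : Fin n → ZMod 2) :
    hammingDist x y = ∑ i, if x i ≠ y i then 1 else 0 := by
  simp [hammingDist, Finset.card_filter]

lemma hd_cons {n : ℕ} (a b : ZMod 2) (x y : Fin n → ZMod 2) :
    hammingDist (Fin.cons a x : Fin (n+1) → ZMod 2) (Fin.cons b y) =
      (if a ≠ b then 1 else 0) + hammingDist x y := by
  rw [hd_eq_sum, hd_eq_sum, Fin.sum_univ_succ]
  simp

lemma hd_cast {n : ℕ} (x y : Fin n → ZMod 2) :
    ((hammingDist x y : ℕ) : ZMod 2) = parity x + parity y := by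
  rw [hd_eq_sum, Nat.cast_sum, parity, parity, ← Finset.sum_add_distrib]
  congr 1; ext i
  by_cases hab : x i = y i
  · have h : ∀ a : ZMod 2, a + a = 0 := by decide
    simp [hab, h]
  · have h : ∀ a b : ZMod 2, a ≠ b → (1 : ZMod 2) = a + b := by decide
    simp only [ne_eq, hab, not_false_eq_true, if_true, Nat.cast_one]
    exact h _ _ hab

lemma odd_iff_cast {m : ℕ} : Odd m ↔ (m : ZMod 2) = 1 := by
  rw [Nat.odd_iff, show ((m : ZMod 2)) = ((m % 2 : ℕ) : ZMod 2) from (ZMod.natCast_mod m 2).symm]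
  rcases Nat.mod_two_eq_zero_or_one m with h | h <;> rw [h] <;> simp

lemma hd_comp_equiv {n : ℕ} (x y : Fin n → ZMod 2) (σ : Equiv.Perm (Fin n)) :
    hammingDist (x ∘ σ) (y ∘ σ) = hammingDist x y := by
  unfold hammingDist
  apply Finset.card_bij (fun i _ => σ i)
  · intro i hi; simpa using (by simpa using hi : x (σ i) ≠ y (σ i))
  · intro i _ j _ h; exact σ.injective h
  · intro j hj; exact ⟨σ.symm j, by simpa using (by simpa using hj : x j ≠ y j), by simp⟩

def cubePermIso {n : ℕ} (σ : Equiv.Perm (Fin n)) : cube n ≃g cube n where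
  toEquiv := Equiv.arrowCongr σ (Equiv.refl (ZMod 2))
  map_rel_iff' := by
    intro x y
    show hammingDist (x ∘ ⇑σ.symm) (y ∘ ⇑σ.symm) = 1 ↔ hammingDist x y = 1
    rw [hd_comp_equiv x y σ.symm]

def consHom {n : ℕ} (a : ZMod 2) : cube n →g cube (n + 1) where
  toFun z := Fin.cons a z
  map_rel' := by
    intro z w h
    show hammingDist _ _ = 1
    rw [hd_cons]
    simpa using (show hammingDist z w = 1 from h)

lemma even_cast {m : ℕ} (h : ¬ Odd m) : (m : ZMod 2) = 0 := by
  rw [Nat.odd_iff] at h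
  rw [show ((m : ZMod 2)) = ((m % 2 : ℕ) : ZMod 2) from (ZMod.natCast_mod m 2).symm]
  have : m % 2 = 0 := by omega
  simp [this]

lemma hd_update {n : ℕ} (x : Fin n → ZMod 2) (j : Fin n) :
    hammingDist x (Function.update x j (x j + 1)) = 1 := by
  rw [hd_eq_sum, Finset.sum_eq_single j]
  · have : ∀ a : ZMod 2, a ≠ a + 1 := by decide
    simp [Function.update_self, this]
  · intro i _ hij
    simp [Function.update_of_ne hij]
  · simp

lemma perm_transfer {m : ℕ} (σ : Equiv.Perm (Fin m)) (x y : Fin m → ZMod 2)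
    (h : ∃ w : (cube m).Walk (x ∘ σ) (y ∘ σ), w.IsHamiltonian) :
    ∃ w : (cube m).Walk x y, w.IsHamiltonian := by
  obtain ⟨w, hw⟩ := h
  let e := cubePermIso σ
  have hx : e.toHom (x ∘ σ) = x := by
    funext i; simp [e, cubePermIso, Equiv.arrowCongr]
  have hy : e.toHom (y ∘ σ) = y := by
    funext i; simp [e, cubePermIso, Equiv.arrowCongr]
  have hham := hw.map e.toHom e.toEquiv.bijective
  exact ⟨(w.map e.toHom).copy hx hy, fun v => by
    rw [SimpleGraph.Walk.support_copy]; exact hham v⟩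

lemma base1 (x y : Fin 1 → ZMod 2) (hodd : Odd (hammingDist x y)) :
    ∃ w : (cube 1).Walk x y, w.IsHamiltonian := by
  have hle : hammingDist x y ≤ 1 := by
    simpa using (hammingDist_le_card_fintype (x := x) (y := y))
  have h1 : hammingDist x y = 1 := by
    rcases hodd with ⟨k, hk⟩; omega
  have hne : x ≠ y := by
    intro h; rw [h, hammingDist_self] at h1; omega
  have h0 : x 0 ≠ y 0 := by
    intro h; apply hne; funext i
    have : i = 0 := Subsingleton.elim i 0
    rw [this, h]
  refine ⟨SimpleGraph.Walk.cons (show (cube 1).Adj x y from h1) SimpleGraph.Walk.nil, fun v => ?_⟩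
  have hv : v = x ∨ v = y := by
    have key : ∀ a b c : ZMod 2, a ≠ b → c = a ∨ c = b := by decide
    rcases key (x 0) (y 0) (v 0) h0 with h | h
    · left; funext i; rw [Subsingleton.elim i 0, h]
    · right; funext i; rw [Subsingleton.elim i 0, h]
  simp only [SimpleGraph.Walk.support_cons, SimpleGraph.Walk.support_nil]
  rcases hv with rfl | rfl
  · simp [List.count_cons, hne.symm]
  · simp [List.count_cons, hne]

lemma step {n : ℕ} (hn : 1 ≤ n)
    (ih : ∀ x y : Fin n → ZMod 2, Odd (hammingDist x y) →
      ∃ w : (cube n).Walk x y, w.IsHamiltonian)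
    (x y : Fin (n+1) → ZMod 2) (h0 : x 0 ≠ y 0) (hodd : Odd (hammingDist x y)) :
    ∃ w : (cube (n+1)).Walk x y, w.IsHamiltonian := by
  set a := x 0 with ha
  set b := y 0 with hb
  set xs := Fin.tail x with hxs
  set ys := Fin.tail y with hys
  have hx : x = Fin.cons a xs := (Fin.cons_self_tail x).symm
  have hy : y = Fin.cons b ys := (Fin.cons_self_tail y).symm
  have hdist : hammingDist x y = 1 + hammingDist xs ys := by
    rw [hx, hy, hd_cons]; simp [h0]
  have heven : ¬ Odd (hammingDist xs ys) := by
    rw [hdist] at hodd; rcases hodd with ⟨k, hk⟩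
    rw [Nat.odd_iff]; omega
  set j : Fin n := ⟨0, hn⟩
  set u := Function.update xs j (xs j + 1) with hu
  have h1 : Odd (hammingDist xs u) := by rw [hu, hd_update]; exact odd_one
  have hpxu : parity xs + parity u = 1 := by
    rw [← hd_cast xs u, hu, hd_update]; simp
  have hpxy : parity xs + parity ys = 0 := by
    rw [← hd_cast xs ys, even_cast heven]
  have h2 : Odd (hammingDist u ys) := by
    rw [odd_iff_cast, hd_cast]
    have key : ∀ p q r : ZMod 2, p + q = 1 → p + r = 0 → q + r = 1 := by decide
    exact key (parity xs) (parity u) (parity ys) hpxu hpxy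
  obtain ⟨w1, hw1⟩ := ih xs u h1
  obtain ⟨w2, hw2⟩ := ih u ys h2
  have hadj : (cube (n+1)).Adj (Fin.cons a u) (Fin.cons b u) := by
    show hammingDist _ _ = 1
    rw [hd_cons]; simp [h0, hammingDist_self]
  let W : (cube (n+1)).Walk (Fin.cons a xs) (Fin.cons b ys) :=
    (w1.map (consHom a)).append (SimpleGraph.Walk.cons hadj (w2.map (consHom b)))
  have hsup : W.support = w1.support.map (consHom a) ++ w2.support.map (consHom b) := by
    erw [SimpleGraph.Walk.support_append, SimpleGraph.Walk.support_cons, List.tail_cons, SimpleGraph.Walk.support_map, SimpleGraph.Walk.support_map]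
  have inj : ∀ c : ZMod 2, Function.Injective (⇑(consHom (n := n) c)) := by
    intro c z w h
    funext i
    have := congrFun h i.succ
    simpa [consHom] using this
  refine ⟨W.copy hx.symm hy.symm, fun v => ?_⟩
  rw [SimpleGraph.Walk.support_copy, hsup, List.count_append]
  have hv0 : v 0 = a ∨ v 0 = b := by
    have key : ∀ p q r : ZMod 2, p ≠ q → r = p ∨ r = q := by decide
    exact key a b (v 0) h0
  have count_zero : ∀ (c d : ZMod 2) (l : List (Fin n → ZMod 2)), v 0 = c → c ≠ d →
      List.count v (l.map (consHom d)) = 0 := by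
    intro c d l hc hcd
    rw [List.count_eq_zero]
    intro hmem
    obtain ⟨z, _, hz⟩ := List.mem_map.1 hmem
    apply hcd
    rw [← hc, ← hz]
    rfl
  rcases hv0 with h | h
  · have hv : v = consHom a (Fin.tail v) := by
      show v = Fin.cons a (Fin.tail v)
      rw [← h]; exact (Fin.cons_self_tail v).symm
    rw [count_zero a b _ h h0]
    rw [hv, List.count_map_of_injective _ _ (inj a), hw1 (Fin.tail v)]
  · have hv : v = consHom b (Fin.tail v) := by
      show v = Fin.cons b (Fin.tail v)
      rw [← h]; exact (Fin.cons_self_tail v).symm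
    rw [count_zero b a _ h (Ne.symm h0)]
    rw [hv, List.count_map_of_injective _ _ (inj b), hw2 (Fin.tail v)]

theorem stmt0 (n : ℕ) (hn : 1 ≤ n) (x y : Fin n → ZMod 2)
    (hp : Odd (hammingDist x y)) :
    ∃ w : (cube n).Walk x y, w.IsHamiltonian := by
  clear hn
  induction n with
  | zero =>
    exfalso
    have : x = y := funext fun i => i.elim0
    rw [this, hammingDist_self] at hp
    exact (Nat.not_odd_zero) hp
  | succ n ih =>
    rcases Nat.eq_zero_or_pos n with rfl | hn
    · exact base1 x y hp
    · have hne : x ≠ y := by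
        intro h; rw [h, hammingDist_self] at hp; exact Nat.not_odd_zero hp
      obtain ⟨i, hi⟩ : ∃ i, x i ≠ y i := by
        by_contra h; push_neg at h; exact hne (funext h)
      apply perm_transfer (Equiv.swap 0 i)
      have h0 : (x ∘ (Equiv.swap 0 i)) 0 ≠ (y ∘ (Equiv.swap 0 i)) 0 := by
        simpa [Equiv.swap_apply_left] using hi
      have hodd' : Odd (hammingDist (x ∘ (Equiv.swap 0 i)) (y ∘ (Equiv.swap 0 i))) := by
        rwa [hd_comp_equiv]
      exact step hn ih _ _ h0 hodd'
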